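/- Let A₁, A₂ ∈ M_{p,q}(F) over a field F, and suppose the system yᵀA₁x = 1, yᵀA₂x = 0 has no solution (x,y) ∈ F^q × F^p. Then A₁ and A₂ are linearly dependent. -/

import Mathlib

lemma aux_span {F : Type*} [Field F] {p : ℕ} (u v : Fin p → F)
    (H : ∀ y : Fin p → F, dotProduct y v = 0 → dotProduct y u = 0) :
    ∃ c : F, u = c • v := by
  by_cases hv : v = 0
  · refine ⟨0, ?_⟩
    funext i
    have := H (Pi.single i 1) (by simp [hv])
    simpa [single_dotProduct] using this
  · obtain ⟨j, hj⟩ := Function.ne_iff.mp hv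
    simp only [Pi.zero_apply] at hj
    refine ⟨u j / v j, ?_⟩
    funext i
    have h0 : dotProduct
        (v j • (Pi.single i 1 : Fin p → F) - v i • (Pi.single j 1 : Fin p → F)) v = 0 := by
      simp [sub_dotProduct, smul_dotProduct, single_dotProduct]
      ring
    have h1 := H _ h0
    simp only [sub_dotProduct, smul_dotProduct, single_dotProduct,
      smul_eq_mul, mul_one] at h1
    have h2 : v j * u i - v i * u j = 0 := by simpa using h1
    simp only [Pi.smul_apply, smul_eq_mul]
    field_simp
    linear_combination h2

theorem stmt_3 {F : Type*} [Field F] {p q : ℕ}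
    (A₁ A₂ : Matrix (Fin p) (Fin q) F)
    (h : ¬ ∃ (x : Fin q → F) (y : Fin p → F),
      dotProduct y (A₁.mulVec x) = 1 ∧ dotProduct y (A₂.mulVec x) = 0) :
    ¬ LinearIndependent F ![A₁, A₂] := by
  push_neg at h
  have h' : ∀ (x : Fin q → F) (y : Fin p → F),
      dotProduct y (A₂.mulVec x) = 0 → dotProduct y (A₁.mulVec x) = 0 := by
    intro x y h2
    by_contra h1
    have key := h ((dotProduct y (A₁.mulVec x))⁻¹ • x) y
    rw [Matrix.mulVec_smul, dotProduct_smul, Matrix.mulVec_smul,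
      dotProduct_smul, smul_eq_mul, smul_eq_mul, inv_mul_cancel₀ h1] at key
    simp [h2] at key
  have hx : ∀ x : Fin q → F, ∃ c : F, A₁.mulVec x = c • A₂.mulVec x := by
    intro x
    exact aux_span _ _ (fun y => h' x y)
  rw [LinearIndependent.pair_iff]
  push_neg
  by_cases hA2 : A₂ = 0
  · exact ⟨0, 1, by simp [hA2], by simp⟩
  · have hx0 : ∃ x₀ : Fin q → F, A₂.mulVec x₀ ≠ 0 := by
      by_contra hc
      push_neg at hc
      apply hA2
      ext i j
      have := congrFun (hc (Pi.single j 1)) i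
      simpa [Matrix.mulVec_single] using this
    obtain ⟨x₀, hx₀⟩ := hx0
    obtain ⟨c₀, hc₀⟩ := hx x₀
    have key : ∀ x : Fin q → F, A₁.mulVec x = c₀ • A₂.mulVec x := by
      intro x
      obtain ⟨c, hc⟩ := hx x
      by_cases hdep : ∃ l : F, A₂.mulVec x = l • A₂.mulVec x₀
      · obtain ⟨l, hl⟩ := hdep
        obtain ⟨c'', hc''⟩ := hx (x - l • x₀)
        rw [Matrix.mulVec_sub, Matrix.mulVec_smul, Matrix.mulVec_sub, Matrix.mulVec_smul,
          hl, sub_self, smul_zero] at hc''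
        have h3 : A₁.mulVec x = l • A₁.mulVec x₀ := sub_eq_zero.mp hc''
        rw [h3, hc₀, hl, smul_comm]
      · obtain ⟨c', hc'⟩ := hx (x + x₀)
        rw [Matrix.mulVec_add, Matrix.mulVec_add, hc, hc₀, smul_add] at hc'
        have heq : (c - c') • A₂.mulVec x = (c' - c₀) • A₂.mulVec x₀ := by
          funext i
          have h4 := congrFun hc' i
          simp only [Pi.add_apply, Pi.smul_apply, smul_eq_mul] at h4 ⊢
          linear_combination h4
        have hy : ∃ y : Fin p → F, dotProduct y (A₂.mulVec x₀) = 0 ∧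
            dotProduct y (A₂.mulVec x) ≠ 0 := by
          by_contra hcc
          push_neg at hcc
          exact hdep (aux_span _ _ hcc)
        obtain ⟨y, hy0, hyne⟩ := hy
        have happ := congrArg (dotProduct y) heq
        rw [dotProduct_smul, dotProduct_smul, hy0, smul_zero,
          smul_eq_mul] at happ
        have hcc' : c = c' := by
          rcases mul_eq_zero.mp happ with h0 | h0
          · exact sub_eq_zero.mp h0
          · exact absurd h0 hyne
        subst hcc'
        have h5 : (c - c₀) • A₂.mulVec x₀ = 0 := by rw [← heq]; simp
        rcases smul_eq_zero.mp h5 with h0 | h0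
        · rw [hc, sub_eq_zero.mp h0]
        · exact absurd h0 hx₀
    have hA : A₁ = c₀ • A₂ := by
      ext i j
      have := congrFun (key (Pi.single j 1)) i
      simpa [Matrix.mulVec_single] using this
    exact ⟨1, -c₀, by rw [hA]; module, by simp⟩
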